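/- Let n ≥ 1 and let C be an n×n matrix over ℤ which is invertible over ℤ (i.e., det C = ±1, equivalently C has an inverse with integer entries). Then det(X•C⁻¹ + (C⁻¹)ᵀ) = det(X•Cᵀ + C) = det(X•C + Cᵀ), i.e., φ_{C⁻¹} = φ_{Cᵀ} = φ_C as polynomials in ℤ[X]. -/

import Mathlib

open Polynomial Matrix

/-- Lemma 3.5(b) of the paper: if `C` is a square integer matrix invertible over `ℤ`
(its determinant is a unit, i.e. `±1`), then `φ_{C⁻¹} = φ_{Cᵀ} = φ_C`, where
`φ_C(X) = det(X • C + Cᵀ)`. -/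
theorem coxeter_polynomial_inverse_transpose (n : ℕ) (hn : 1 ≤ n)
    (C : Matrix (Fin n) (Fin n) ℤ) (hC : IsUnit C.det) :
    ((X : ℤ[X]) • C⁻¹.map Polynomial.C + (C⁻¹)ᵀ.map Polynomial.C).det =
        ((X : ℤ[X]) • Cᵀ.map Polynomial.C + (Cᵀ)ᵀ.map Polynomial.C).det ∧
      ((X : ℤ[X]) • Cᵀ.map Polynomial.C + (Cᵀ)ᵀ.map Polynomial.C).det =
        ((X : ℤ[X]) • C.map Polynomial.C + Cᵀ.map Polynomial.C).det := by
  set A : Matrix (Fin n) (Fin n) ℤ[X] := C.map Polynomial.C with hA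
  have hdetA : A.det = Polynomial.C C.det := by
    simpa using (RingHom.map_det (Polynomial.C : ℤ →+* ℤ[X]) C).symm
  -- det C = ±1, so det A * det A = 1
  have hsq : A.det * A.det = 1 := by
    rw [hdetA, ← _root_.map_mul, ← map_one (Polynomial.C : ℤ →+* ℤ[X])]
    congr 1
    rcases Int.isUnit_iff.mp hC with h | h <;> rw [h] <;> ring
  have hAunit : IsUnit A.det := IsUnit.of_mul_eq_one _ hsq
  -- C⁻¹.map C = A⁻¹
  have hmapinv : C⁻¹.map Polynomial.C = A⁻¹ := by
    symm
    apply Matrix.inv_eq_right_inv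
    rw [hA, ← Matrix.map_mul, Matrix.mul_nonsing_inv C hC]
    simp
  have hAAinv : A * A⁻¹ = 1 := Matrix.mul_nonsing_inv A hAunit
  have hAinvA : A⁻¹ * A = 1 := Matrix.nonsing_inv_mul A hAunit
  have hATinv : (Aᵀ)⁻¹ = (A⁻¹)ᵀ := (Matrix.transpose_nonsing_inv A).symm
  have hTmap : Cᵀ.map Polynomial.C = Aᵀ := by simp [hA, Matrix.transpose_map]
  constructor
  · -- φ_{C⁻¹} = φ_{Cᵀ}
    have key : (X : ℤ[X]) • A⁻¹ + (A⁻¹)ᵀ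
        = (A⁻¹)ᵀ * ((X : ℤ[X]) • Aᵀ + A) * A⁻¹ := by
      rw [Matrix.mul_add, Matrix.add_mul, Matrix.mul_smul, Matrix.smul_mul]
      rw [← hATinv, Matrix.nonsing_inv_mul Aᵀ (by simpa [Matrix.det_transpose] using hAunit)]
      rw [Matrix.one_mul, hATinv]
      congr 1
      rw [Matrix.mul_assoc, hAAinv, Matrix.mul_one]
    have hinvdet : A⁻¹.det * A.det = 1 := by
      rw [← Matrix.det_mul, hAinvA, Matrix.det_one]
    have hdinv : A⁻¹.det = A.det := by
      calc A⁻¹.det = A⁻¹.det * (A.det * A.det) := by rw [hsq, mul_one]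
        _ = (A⁻¹.det * A.det) * A.det := by ring
        _ = A.det := by rw [hinvdet, one_mul]
    have hTinvmap : (C⁻¹)ᵀ.map Polynomial.C = (A⁻¹)ᵀ := by
      rw [Matrix.transpose_map, hmapinv]
    rw [hmapinv, hTinvmap, hTmap, Matrix.transpose_transpose, ← hA, key, Matrix.det_mul,
      Matrix.det_mul, Matrix.det_transpose, hdinv]
    linear_combination ((X : ℤ[X]) • Aᵀ + A).det * hsq
  · -- φ_{Cᵀ} = φ_C
    rw [hTmap, Matrix.transpose_transpose, ← hA]
    have : (X : ℤ[X]) • Aᵀ + A = ((X : ℤ[X]) • A + Aᵀ)ᵀ := by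
      rw [Matrix.transpose_add, Matrix.transpose_smul, Matrix.transpose_transpose]
    rw [this, Matrix.det_transpose]
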